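/- Let A be a strongly connected almost-group automaton with dangling state p₀ and let D be the stable class containing p₀. Then every stable class has cardinality |D| or |D| - 1. -/

import Mathlib

/-- The stability relation: `p` and `q` are stable iff for every word `u`
there is a word `v` with `p·uv = q·uv`. -/
def Stable {Q A : Type*} (δ : Q → A → Q) (p q : Q) : Prop :=
  ∀ u : List A, ∃ v : List A, (u ++ v).foldl δ p = (u ++ v).foldl δ q

theorem stable_refl {Q A : Type*} (δ : Q → A → Q) (p : Q) : Stable δ p p :=
  fun _ => ⟨[], rfl⟩

theorem stable_symm {Q A : Type*} {δ : Q → A → Q} {p q : Q}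
    (h : Stable δ p q) : Stable δ q p :=
  fun u => (h u).imp fun _ hv => hv.symm

theorem stable_trans {Q A : Type*} {δ : Q → A → Q} {p q r : Q}
    (h1 : Stable δ p q) (h2 : Stable δ q r) : Stable δ p r := by
  intro u
  obtain ⟨v, hv⟩ := h1 u
  obtain ⟨w, hw⟩ := h2 (u ++ v)
  refine ⟨v ++ w, ?_⟩
  have e1 : (u ++ (v ++ w)).foldl δ p = ((u ++ v) ++ w).foldl δ p := by
    rw [List.append_assoc]
  have e2 : (u ++ (v ++ w)).foldl δ r = ((u ++ v) ++ w).foldl δ r := by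
    rw [List.append_assoc]
  rw [e1, e2]
  simp only [List.foldl_append] at hv hw ⊢
  rw [hv]; exact hw

theorem stable_step {Q A : Type*} {δ : Q → A → Q} {p q : Q}
    (h : Stable δ p q) (a : A) : Stable δ (δ p a) (δ q a) := by
  intro u
  obtain ⟨v, hv⟩ := h (a :: u)
  exact ⟨v, hv⟩

/-- In a strongly connected almost-group automaton with dangling state `p₀`,
letting `D` be the stable class of `p₀`, every stable class has cardinality
`|D|` or `|D| - 1`. -/
theorem stmt_12 {Q A : Type*} [Finite Q] (δ : Q → A → Q) (a₀ : A) (p₀ : Q)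
    (hperm : ∀ a : A, a ≠ a₀ → Function.Bijective fun q => δ q a)
    (hcyc : Nat.card (Function.periodicPts fun q => δ q a₀) = Nat.card Q - 1)
    (hp₀ : p₀ ∉ Function.periodicPts fun q => δ q a₀)
    (hsc : ∀ p q : Q, ∃ u : List A, u.foldl δ p = q) :
    ∀ q : Q, Nat.card {x : Q | Stable δ x q} = Nat.card {x : Q | Stable δ x p₀} ∨
      Nat.card {x : Q | Stable δ x q} = Nat.card {x : Q | Stable δ x p₀} - 1 := by
  set f : Q → Q := fun q => δ q a₀ with hf
  set S : Q → Set Q := fun q => {x : Q | Stable δ x q} with hS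
  -- f is injective on its periodic points
  have hinjPer : Set.InjOn f (Function.periodicPts f) := by
    intro x hx y hy hxy
    obtain ⟨m, hm, hmx⟩ := hx
    obtain ⟨k, hk, hky⟩ := hy
    have h1 : f^[m * k] x = x := hmx.mul_const k
    have h2 : f^[k * m] y = y := hky.mul_const m
    have hmk : m * k = (m * k - 1) + 1 := by
      have : 1 ≤ m * k := Nat.one_le_iff_ne_zero.mpr (by positivity)
      omega
    have hx' : f^[(m * k - 1) + 1] x = x := by rw [← hmk]; exact h1
    have hy' : f^[(m * k - 1) + 1] y = y := by
      rw [← hmk, mul_comm]; exact h2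
    rw [Function.iterate_succ_apply] at hx' hy'
    rw [← hx', hxy, hy']
  -- the periodic points are exactly Q \ {p₀}
  have hQpos : 1 ≤ Nat.card Q := Nat.one_le_iff_ne_zero.mpr
    (Nat.card_ne_zero.mpr ⟨⟨p₀⟩, inferInstance⟩)
  have hcompl : ({p₀}ᶜ : Set Q).ncard = Nat.card Q - 1 := by
    have hd : Disjoint ({p₀}ᶜ : Set Q) {p₀} := disjoint_compl_left
    have hu : (({p₀}ᶜ : Set Q) ∪ {p₀}) = Set.univ := by rw [Set.union_comm, Set.union_compl_self]
    have := Set.ncard_union_eq hd (Set.toFinite _) (Set.toFinite _)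
    rw [hu, Set.ncard_univ, Set.ncard_singleton] at this
    omega
  have hPer : Function.periodicPts f = ({p₀}ᶜ : Set Q) := by
    apply Set.eq_of_subset_of_ncard_le
    · intro x hx
      simp only [Set.mem_compl_iff, Set.mem_singleton_iff]
      rintro rfl
      exact hp₀ hx
    · rw [hcompl, ← Nat.card_coe_set_eq, hcyc]
    · exact Set.toFinite _
  have hinj : Set.InjOn f ({p₀}ᶜ : Set Q) := hPer ▸ hinjPer
  -- classes of stable states coincide
  have hSeq : ∀ {p q : Q}, Stable δ p q → S p = S q := by
    intro p q h
    ext x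
    exact ⟨fun hx => stable_trans hx h, fun hx => stable_trans hx (stable_symm h)⟩
  -- the map `δ · a` maps S s into S (δ s a)
  have hmaps : ∀ (a : A) (s : Q), ∀ x ∈ S s, δ x a ∈ S (δ s a) := by
    intro a s x hx
    exact stable_step hx a
  -- key monotonicity: away from the class of p₀, class size does not decrease
  have key : ∀ (a : A) (s : Q), ¬ Stable δ s p₀ → (S s).ncard ≤ (S (δ s a)).ncard := by
    intro a s hs
    have hmapsTo : ∀ x ∈ S s, (fun x => δ x a) x ∈ S (δ s a) := hmaps a s
    have hinjOn : Set.InjOn (fun x => δ x a) (S s) := by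
      rcases eq_or_ne a a₀ with rfl | hne
      · refine hinj.mono ?_
        intro x hx
        simp only [Set.mem_compl_iff, Set.mem_singleton_iff]
        rintro rfl
        exact hs (stable_symm hx)
      · exact ((hperm a hne).injective).injOn
    exact Set.ncard_le_ncard_of_injOn _ hmapsTo hinjOn (Set.toFinite _)
  -- from the class of p₀, class size drops by at most one
  have keyD : ∀ (a : A) (s : Q), Stable δ s p₀ →
      (S p₀).ncard - 1 ≤ (S (δ s a)).ncard := by
    intro a s hs
    have hSsp : S s = S p₀ := hSeq hs
    have hp₀mem : p₀ ∈ S s := stable_symm hs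
    rcases eq_or_ne a a₀ with rfl | hne
    · have hmapsTo : ∀ x ∈ S s \ {p₀}, (fun x => δ x a) x ∈ S (δ s a) :=
        fun x hx => hmaps a s x hx.1
      have hinjOn : Set.InjOn (fun x => δ x a) (S s \ {p₀}) := by
        refine hinj.mono ?_
        intro x hx
        simpa using hx.2
      have h1 : (S s \ {p₀}).ncard ≤ (S (δ s a)).ncard :=
        Set.ncard_le_ncard_of_injOn _ hmapsTo hinjOn (Set.toFinite _)
      have h2 : (S s \ {p₀}).ncard = (S s).ncard - 1 :=
        Set.ncard_diff_singleton_of_mem hp₀mem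
      rw [h2, hSsp] at h1
      exact h1
    · have h1 : (S s).ncard ≤ (S (δ s a)).ncard := by
        have hmapsTo : ∀ x ∈ S s, (fun x => δ x a) x ∈ S (δ s a) := hmaps a s
        exact Set.ncard_le_ncard_of_injOn _ hmapsTo
          ((hperm a hne).injective).injOn (Set.toFinite _)
      rw [hSsp] at h1
      omega
  -- upper bound: any class reaching p₀ has size at most |D|
  have L1 : ∀ (u : List A) (q : Q), u.foldl δ q = p₀ → (S q).ncard ≤ (S p₀).ncard := by
    intro u
    induction u with
    | nil => intro q hq; rw [show q = p₀ from hq]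
    | cons a u ih =>
      intro q hq
      by_cases hqp : Stable δ q p₀
      · rw [hSeq hqp]
      · exact le_trans (key a q hqp) (ih (δ q a) hq)
  -- lower bound propagation
  have L2 : ∀ (u : List A) (s : Q), (S p₀).ncard - 1 ≤ (S s).ncard →
      (S p₀).ncard - 1 ≤ (S (u.foldl δ s)).ncard := by
    intro u
    induction u with
    | nil => intro s hs; exact hs
    | cons a u ih =>
      intro s hs
      apply ih
      by_cases hsp : Stable δ s p₀
      · exact keyD a s hsp
      · exact le_trans hs (key a s hsp)
  intro q
  obtain ⟨u, hu⟩ := hsc q p₀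
  obtain ⟨v, hv⟩ := hsc p₀ q
  have hub : (S q).ncard ≤ (S p₀).ncard := L1 u q hu
  have hlb : (S p₀).ncard - 1 ≤ (S q).ncard := by
    have := L2 v p₀ (Nat.sub_le _ _)
    rwa [hv] at this
  have e1 : Nat.card {x : Q | Stable δ x q} = (S q).ncard := Nat.card_coe_set_eq _
  have e2 : Nat.card {x : Q | Stable δ x p₀} = (S p₀).ncard := Nat.card_coe_set_eq _
  rw [e1, e2]
  omega
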